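/- Let d ≥ 2 and M ≥ 1. For integers k ≥ 1, any a' ∈ ℤ, the sum S = (1/(dk)) Σ_{j=0}^{d-1} ((jk + a') mod dk) satisfies S ≥ (d-1)/2. Consequently, for a linear automorphism given in block form by a dM×dM matrix that cyclically permutes d blocks of size M (with the composite acting with k-th roots of unity eigenvalues), the age of the induced projectivized action is at least M(d-1)/2. -/

import Mathlib

theorem term_formula (d k j a' : ℤ) (hd : 0 < d) (hk : 0 < k) :
    (j * k + a') % (d * k) = ((j + a' / k) % d) * k + a' % k := by
  have hq := Int.mul_ediv_add_emod a' k
  set q := a' / k with hqdef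
  set r := a' % k with hrdef
  have hr0 : 0 ≤ r := Int.emod_nonneg a' hk.ne'
  have hr1 : r < k := Int.emod_lt_of_pos a' hk
  have h0 : 0 ≤ (j + q) % d := Int.emod_nonneg _ hd.ne'
  have h1 : (j + q) % d < d := Int.emod_lt_of_pos _ hd
  have hdvd : d ∣ (j + q) - (j + q) % d := Int.dvd_self_sub_of_emod_eq rfl
  obtain ⟨m, hm⟩ := hdvd
  have key : (j * k + a') - (((j + q) % d) * k + r) = (d * k) * m := by
    have : j + q - (j + q) % d = d * m := hm
    nlinarith [hq, this]
  have : (j * k + a') % (d * k) = (((j + q) % d) * k + r) % (d * k) := by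
    rw [Int.emod_eq_emod_iff_emod_sub_eq_zero, key]
    exact Int.mul_emod_right _ _
  rw [this, Int.emod_eq_of_lt (by positivity) (by nlinarith)]

theorem bij_sum (d q : ℤ) (hd : 0 < d) :
    ∑ j ∈ Finset.Ico (0 : ℤ) d, ((j + q) % d) = ∑ j ∈ Finset.Ico (0 : ℤ) d, j := by
  apply Finset.sum_nbij' (i := fun j => (j + q) % d) (j := fun j => (j - q) % d)
  · intro a ha
    simp only [Finset.mem_Ico] at *
    exact ⟨Int.emod_nonneg _ hd.ne', Int.emod_lt_of_pos _ hd⟩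
  · intro a ha
    simp only [Finset.mem_Ico] at *
    exact ⟨Int.emod_nonneg _ hd.ne', Int.emod_lt_of_pos _ hd⟩
  · intro a ha
    simp only [Finset.mem_Ico] at ha
    rw [Int.sub_emod, Int.emod_emod_of_dvd _ dvd_rfl, ← Int.sub_emod]
    simp only [add_sub_cancel_right]
    exact Int.emod_eq_of_lt ha.1 ha.2
  · intro a ha
    simp only [Finset.mem_Ico] at ha
    rw [Int.add_emod, Int.emod_emod_of_dvd _ dvd_rfl, ← Int.add_emod]
    simp only [sub_add_cancel]
    exact Int.emod_eq_of_lt ha.1 ha.2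
  · intro a _
    rfl

theorem gauss (d : ℤ) (hd : 0 ≤ d) :
    2 * ∑ j ∈ Finset.Ico (0 : ℤ) d, j = d * (d - 1) := by
  refine Int.le_induction (m := 0)
    (motive := fun n _ => 2 * ∑ j ∈ Finset.Ico (0 : ℤ) n, j = n * (n - 1)) (by simp) ?_ d hd
  intro n hn ih
  have : Finset.Ico (0:ℤ) (n+1) = insert n (Finset.Ico (0:ℤ) n) := by
    ext x; simp [Finset.mem_Ico]; omega
  rw [this, Finset.sum_insert (by simp), mul_add, ih]
  ring

/-- Let `d ≥ 2` and `M ≥ 1`. For integers `k ≥ 1` and any `a' ∈ ℤ`, the sum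
`S = (1/(dk)) Σ_{j=0}^{d-1} ((jk + a') mod dk)` satisfies `S ≥ (d-1)/2`.  Consequently
(this is the age bound for a dM×dM block matrix cyclically permuting `d` blocks of size `M`,
each eigenvalue orbit contributing one such sum) the age bound `M·(d-1)/2 ≤ M·S` holds. -/
theorem stmt2 (d M k : ℤ) (hd : 2 ≤ d) (hM : 1 ≤ M) (hk : 1 ≤ k) (a' : ℤ) :
    ((d - 1 : ℚ)) / 2 ≤
        (1 / ((d * k : ℤ) : ℚ)) *
          ∑ j ∈ Finset.Ico (0 : ℤ) d, (((j * k + a') % (d * k) : ℤ) : ℚ) ∧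
      (M : ℚ) * (d - 1) / 2 ≤
        (M : ℚ) * ((1 / ((d * k : ℤ) : ℚ)) *
          ∑ j ∈ Finset.Ico (0 : ℤ) d, (((j * k + a') % (d * k) : ℤ) : ℚ)) := by
  have hd0 : (0:ℤ) < d := by linarith
  have hk0 : (0:ℤ) < k := by linarith
  have hr0 : 0 ≤ a' % k := Int.emod_nonneg a' hk0.ne'
  set q := a' / k with hq
  have h1 : k * ∑ j ∈ Finset.Ico (0:ℤ) d, ((j + q) % d) ≤
      ∑ j ∈ Finset.Ico (0:ℤ) d, ((j * k + a') % (d * k)) := by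
    rw [Finset.mul_sum]
    apply Finset.sum_le_sum
    intro j hj
    rw [term_formula d k j a' hd0 hk0, mul_comm]
    linarith
  rw [bij_sum d q hd0] at h1
  have h2 := gauss d (by linarith)
  have h3 : k * (d * (d - 1)) ≤
      2 * ∑ j ∈ Finset.Ico (0:ℤ) d, ((j * k + a') % (d * k)) := by
    calc k * (d * (d - 1)) = 2 * (k * ∑ j ∈ Finset.Ico (0:ℤ) d, j) := by rw [← h2]; ring
    _ ≤ _ := by linarith
  have h3q : ((k : ℚ) * (d * (d - 1))) ≤
      2 * ∑ j ∈ Finset.Ico (0:ℤ) d, (((j * k + a') % (d * k) : ℤ) : ℚ) := by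
    have := (Int.cast_le (R := ℚ)).mpr h3
    push_cast at this ⊢
    convert this using 2
  have hdkq : (0:ℚ) < ((d * k : ℤ) : ℚ) := by
    push_cast; positivity
  have hfirst : ((d - 1 : ℚ)) / 2 ≤
      (1 / ((d * k : ℤ) : ℚ)) *
        ∑ j ∈ Finset.Ico (0 : ℤ) d, (((j * k + a') % (d * k) : ℤ) : ℚ) := by
    rw [one_div, inv_mul_eq_div, le_div_iff₀ hdkq]
    push_cast at h3q ⊢
    nlinarith [h3q]
  refine ⟨hfirst, ?_⟩
  have hM0 : (0:ℚ) ≤ (M:ℚ) := by positivity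
  calc (M : ℚ) * (d - 1) / 2 = (M:ℚ) * ((d - 1) / 2) := by ring
  _ ≤ _ := mul_le_mul_of_nonneg_left hfirst hM0
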